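/- Let p ≥ 3 be a prime and let G be a finite p-group generated by two elements, of nilpotency class greater than 3 and in which every proper subgroup has nilpotency class at most 3. Then for all x, y, z, t ∈ G with z = x or t = x: [x^p, y, z, t] = [x,y,z,t]^p and [y, x^p, z, t] = [y,x,z,t]^p. -/

import Mathlib

/-- Commutator with the convention of the paper: `[x, y] = x⁻¹ y⁻¹ x y`. -/
def pcomm {G : Type*} [Group G] (x y : G) : G := x⁻¹ * y⁻¹ * x * y

/-- Left-normed iterated commutator `[x, y, z₁, …, z_s]`. -/
def lcomm {G : Type*} [Group G] (x y : G) (zs : List G) : G :=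
  zs.foldl pcomm (pcomm x y)

namespace CPPE

open scoped commutatorElement

variable {G : Type*} [Group G]

/-- conjugation `g^h = h⁻¹ g h` -/
def cnj (g h : G) : G := h⁻¹ * g * h

lemma pc_mul_left (a b y : G) : pcomm (a*b) y = cnj (pcomm a y) b * pcomm b y := by
  simp only [pcomm, cnj]; group

lemma pc_mul_right (g h k : G) : pcomm g (h*k) = pcomm g k * cnj (pcomm g h) k := by
  simp only [pcomm, cnj]; group

lemma cnj_eq (g h : G) : cnj g h = g * pcomm g h := by
  simp only [pcomm, cnj]; group

lemma pc_one_left (y : G) : pcomm 1 y = 1 := by simp [pcomm]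

lemma pc_one_right (g : G) : pcomm g 1 = 1 := by simp [pcomm]

lemma pc_eq_one_iff (a b : G) : pcomm a b = 1 ↔ a * b = b * a := by
  constructor
  · intro h
    calc a * b = b * a * (a⁻¹ * b⁻¹ * a * b) := by group
    _ = b * a * pcomm a b := rfl
    _ = b * a := by rw [h, mul_one]
  · intro h
    show a⁻¹ * b⁻¹ * a * b = 1
    calc a⁻¹ * b⁻¹ * a * b = a⁻¹ * b⁻¹ * (a * b) := by group
    _ = a⁻¹ * b⁻¹ * (b * a) := by rw [h]
    _ = 1 := by group

lemma pc_eq_one_of_commute {a b : G} (h : Commute a b) : pcomm a b = 1 :=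
  (pc_eq_one_iff a b).mpr h.eq

lemma commute_of_pc_eq_one {a b : G} (h : pcomm a b = 1) : Commute a b :=
  (pc_eq_one_iff a b).mp h

lemma cnj_eq_self_of_commute {g h : G} (h' : Commute g h) : cnj g h = g := by
  rw [cnj_eq, pc_eq_one_of_commute h', mul_one]

lemma pc_eq_commutatorElement (g h : G) : pcomm g h = ⁅g⁻¹, h⁻¹⁆ := by
  simp only [pcomm, commutatorElement_def]; group

lemma pc_mem_commutator (g h : G) : pcomm g h ∈ commutator G := by
  rw [pc_eq_commutatorElement, commutator_def]
  exact Subgroup.commutator_mem_commutator (Subgroup.mem_top _) (Subgroup.mem_top _)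

/-- membership in the next term of the lower central series -/
lemma pc_mem_lcs_succ {n : ℕ} {g : G} (hg : g ∈ (⊤ : Subgroup G).lowerCentralSeries n) (h : G) :
    pcomm g h ∈ (⊤ : Subgroup G).lowerCentralSeries (n+1) := by
  rw [Subgroup.lowerCentralSeries_succ, pc_eq_commutatorElement]
  exact Subgroup.commutator_mem_commutator (inv_mem hg) (Subgroup.mem_top _)

/-- Quadruple commutators of elements of a subgroup of class ≤ 3 vanish. -/
lemma quad_eq_one {H : Subgroup G} (hH : (⊤ : Subgroup H).lowerCentralSeries 3 = ⊥)
    {a b c d : G} (ha : a ∈ H) (hb : b ∈ H) (hc : c ∈ H) (hd : d ∈ H) :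
    pcomm (pcomm (pcomm a b) c) d = 1 := by
  set A : H := ⟨a, ha⟩
  set B : H := ⟨b, hb⟩
  set C : H := ⟨c, hc⟩
  set D : H := ⟨d, hd⟩
  have h1 : pcomm A B ∈ (⊤ : Subgroup H).lowerCentralSeries 1 := by
    have : (A : H) ∈ (⊤ : Subgroup H).lowerCentralSeries 0 := by
      rw [Subgroup.lowerCentralSeries_zero]; trivial
    exact pc_mem_lcs_succ this B
  have h2 : pcomm (pcomm A B) C ∈ (⊤ : Subgroup H).lowerCentralSeries 2 := pc_mem_lcs_succ h1 C
  have h3 : pcomm (pcomm (pcomm A B) C) D ∈ (⊤ : Subgroup H).lowerCentralSeries 3 := pc_mem_lcs_succ h2 D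
  rw [hH, Subgroup.mem_bot] at h3
  have := congrArg (Subtype.val) h3
  simpa [pcomm, A, B, C, D] using this

lemma commutatorElement_mul_right_central {Q : Type*} [Group Q] (a b c : Q)
    (hc : ∀ g : Q, Commute c g) : ⁅a, b * c⁆ = ⁅a, b⁆ := by
  have h1 : c * a⁻¹ = a⁻¹ * c := (hc a⁻¹).eq
  calc ⁅a, b * c⁆ = a * b * (c * a⁻¹) * c⁻¹ * b⁻¹ := by
        rw [commutatorElement_def]; group
  _ = a * b * (a⁻¹ * c) * c⁻¹ * b⁻¹ := by rw [h1]
  _ = ⁅a, b⁆ := by rw [commutatorElement_def]; group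

lemma commutatorElement_mul_left_central {Q : Type*} [Group Q] (a b c : Q)
    (hc : ∀ g : Q, Commute c g) : ⁅a * c, b⁆ = ⁅a, b⁆ := by
  have h1 : c * b = b * c := (hc b).eq
  calc ⁅a * c, b⁆ = a * (c * b) * c⁻¹ * a⁻¹ * b⁻¹ := by
        rw [commutatorElement_def]; group
  _ = a * (b * c) * c⁻¹ * a⁻¹ * b⁻¹ := by rw [h1]
  _ = ⁅a, b⁆ := by rw [commutatorElement_def]; group

section Nongen

variable [Finite G]

lemma commutator_le_sup_lcs_succ (H : Subgroup G) (n : ℕ)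
    (htop : H ⊔ (⊤ : Subgroup G).lowerCentralSeries n = ⊤) :
    commutator G ≤ H ⊔ (⊤ : Subgroup G).lowerCentralSeries (n+1) := by
  set L := (⊤ : Subgroup G).lowerCentralSeries (n+1) with hL
  rw [commutator_def, Subgroup.commutator_le]
  intro g1 hg1 g2 hg2
  have hdec : ∀ g : G, ∃ h ∈ H, ∃ w ∈ (⊤ : Subgroup G).lowerCentralSeries n, g = h * w := by
    intro g
    have hg : g ∈ (↑(H ⊔ (⊤ : Subgroup G).lowerCentralSeries n) : Set G) := by
      rw [htop]; trivial
    rw [Subgroup.mul_normal] at hg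
    obtain ⟨h, hh, w, hw, rfl⟩ := hg
    exact ⟨h, hh, w, hw, rfl⟩
  obtain ⟨h1, hh1, w1, hw1, rfl⟩ := hdec g1
  obtain ⟨h2, hh2, w2, hw2, rfl⟩ := hdec g2
  set π := QuotientGroup.mk' L with hπ
  have hcen : ∀ w ∈ (⊤ : Subgroup G).lowerCentralSeries n, ∀ g : G, Commute (π w) (π g) := by
    intro w hw g
    have h1 : ⁅w, g⁆ ∈ L := by
      rw [hL, Subgroup.lowerCentralSeries_succ]
      exact Subgroup.commutator_mem_commutator hw (Subgroup.mem_top _)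
    have h2 : π ⁅w, g⁆ = 1 := by
      rw [hπ]
      exact (QuotientGroup.eq_one_iff _).mpr h1
    rw [map_commutatorElement] at h2
    exact commutatorElement_eq_one_iff_commute.mp h2
  have key : π ⁅h1 * w1, h2 * w2⁆ = π ⁅h1, h2⁆ := by
    rw [map_commutatorElement, map_commutatorElement, map_mul, map_mul]
    rw [commutatorElement_mul_right_central _ _ _ (fun g => by
      obtain ⟨g, rfl⟩ := QuotientGroup.mk'_surjective L g
      exact hcen w2 hw2 g)]
    rw [commutatorElement_mul_left_central _ _ _ (fun g => by
      obtain ⟨g, rfl⟩ := QuotientGroup.mk'_surjective L g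
      exact hcen w1 hw1 g)]
  have hcomm_mem : ⁅h1, h2⁆ ∈ H := by
    rw [commutatorElement_def]
    exact H.mul_mem (H.mul_mem (H.mul_mem hh1 hh2) (H.inv_mem hh1)) (H.inv_mem hh2)
  have hmem : ⁅h1 * w1, h2 * w2⁆ ∈ Subgroup.comap π (Subgroup.map π H) := by
    rw [Subgroup.mem_comap, key]
    exact Subgroup.mem_map_of_mem π hcomm_mem
  rw [Subgroup.comap_map_eq, hπ, QuotientGroup.ker_mk'] at hmem
  exact hmem

lemma sup_commutator_eq_top {H : Subgroup G} (hnil : Group.IsNilpotent G)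
    (h : H ⊔ commutator G = ⊤) : H = ⊤ := by
  obtain ⟨N, hN⟩ := Subgroup.nilpotent_iff_lowerCentralSeries.mp hnil
  have key : ∀ n : ℕ, H ⊔ (⊤ : Subgroup G).lowerCentralSeries n = ⊤ := by
    intro n
    induction n with
    | zero => rw [Subgroup.lowerCentralSeries_zero, sup_top_eq]
    | succ n ih =>
      have h2 := commutator_le_sup_lcs_succ H n ih
      have h3 : H ⊔ commutator G ≤ H ⊔ (H ⊔ (⊤ : Subgroup G).lowerCentralSeries (n+1)) :=
        sup_le_sup_left h2 H
      rw [← sup_assoc, sup_idem] at h3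
      exact top_le_iff.mp (h ▸ h3)
  have := key N
  rwa [hN, sup_bot_eq] at this

end Nongen

section Properness

variable [Finite G] {p : ℕ} (hp : p.Prime) (hG : IsPGroup p G)
  (hclass : (⊤ : Subgroup G).lowerCentralSeries 3 ≠ ⊥)

include hp hG hclass

lemma not_cyclic (a : G) : Subgroup.closure ({a} : Set G) ≠ ⊤ := by
  intro h
  apply hclass
  have hcomm : commutator G = ⊥ := by
    rw [commutator_def, eq_bot_iff, Subgroup.commutator_le]
    intro g1 _ g2 _
    rw [Subgroup.mem_bot, commutatorElement_eq_one_iff_commute]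
    have m1 : g1 ∈ Subgroup.closure ({a} : Set G) := h ▸ Subgroup.mem_top g1
    have m2 : g2 ∈ Subgroup.closure ({a} : Set G) := h ▸ Subgroup.mem_top g2
    obtain ⟨n1, rfl⟩ := Subgroup.mem_closure_singleton.mp m1
    obtain ⟨n2, rfl⟩ := Subgroup.mem_closure_singleton.mp m2
    exact Commute.zpow_zpow (Commute.refl a) n1 n2
  have h1 : (⊤ : Subgroup G).lowerCentralSeries 1 = ⊥ := by
    rw [Subgroup.top_lowerCentralSeries_one, hcomm]
  rw [← le_bot_iff, ← h1]
  exact Subgroup.lowerCentralSeries_antitone (⊤ : Subgroup G) (by norm_num)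

/-- The key properness lemma: `⟨a, bᵖ⟩ Γ₂(G)` is a proper subgroup. -/
lemma J_proper (a b : G) :
    Subgroup.closure ({a, b^p} : Set G) ⊔ commutator G ≠ ⊤ := by
  intro htop
  haveI : Fact p.Prime := ⟨hp⟩
  have hnil : Group.IsNilpotent G := hG.isNilpotent
  -- first, closure {a, b^p} = ⊤
  have h1 : Subgroup.closure ({a, b^p} : Set G) = ⊤ :=
    sup_commutator_eq_top hnil htop
  -- the subgroup M = <a> ⊔ commutator is normal
  set M := Subgroup.closure ({a} : Set G) ⊔ commutator G with hM
  have hMn : M.Normal := by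
    constructor
    intro n hn g
    have key : g * n * g⁻¹ = n * pcomm n g⁻¹ := by
      simp only [pcomm]; group
    rw [key]
    exact M.mul_mem hn (Subgroup.mem_sup_right (pc_mem_commutator _ _))
  -- in the quotient Q = G/M, the image of b is trivial
  set π := QuotientGroup.mk' M with hπ
  have hπa : π a = 1 := by
    rw [hπ, QuotientGroup.mk'_apply, QuotientGroup.eq_one_iff]
    exact Subgroup.mem_sup_left (Subgroup.mem_closure_singleton_self a)
  have hbZ : ∀ g : G, π g ∈ Subgroup.closure ({π b ^ p} : Set (G ⧸ M)) := by
    intro g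
    have hg : g ∈ Subgroup.closure ({a, b^p} : Set G) := h1 ▸ Subgroup.mem_top g
    induction hg using Subgroup.closure_induction with
    | mem w hw =>
      rcases hw with h | h
      · rw [h, hπa]; exact Subgroup.one_mem _
      · rw [h, map_pow]
        exact Subgroup.mem_closure_singleton_self _
    | one => rw [map_one]; exact Subgroup.one_mem _
    | mul u v _ _ hu hv => rw [map_mul]; exact Subgroup.mul_mem _ hu hv
    | inv u _ hu => rw [map_inv]; exact Subgroup.inv_mem _ hu
  -- b's image lies in the closure of its own p-th power, hence is trivial
  have hb := hbZ b
  obtain ⟨m, hm⟩ := Subgroup.mem_closure_singleton.mp hb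
  have hord : ((π b) ^ (p * m - 1 : ℤ) = 1) := by
    have : (π b ^ p : G ⧸ M) ^ m = π b := hm
    calc (π b) ^ (p * m - 1 : ℤ) = ((π b ^ p) ^ m) * (π b)⁻¹ := by
          rw [← zpow_natCast (π b) p, ← zpow_mul]
          group
    _ = 1 := by rw [this]; group
  have hdvd : ((orderOf (π b) : ℤ)) ∣ (p * m - 1 : ℤ) :=
    orderOf_dvd_iff_zpow_eq_one.mpr hord
  -- order of π b is a power of p
  have hQp : IsPGroup p (G ⧸ M) := hG.to_quotient M
  obtain ⟨k, hk⟩ := hQp (π b)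
  have hordp : orderOf (π b) ∣ p ^ k := orderOf_dvd_of_pow_eq_one hk
  obtain ⟨j, hj, hje⟩ := (Nat.dvd_prime_pow hp).mp hordp
  have hπb : π b = 1 := by
    rcases Nat.eq_zero_or_pos j with h0 | hpos
    · have : orderOf (π b) = 1 := by rw [hje, h0, pow_zero]
      exact orderOf_eq_one_iff.mp this
    · exfalso
      have hpdvd : (p : ℤ) ∣ (p * m - 1 : ℤ) := by
        have h0 : (p : ℤ) ∣ (orderOf (π b) : ℤ) := by
          rw [hje]
          exact_mod_cast Int.natCast_dvd_natCast.mpr (dvd_pow_self p hpos.ne')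
        exact h0.trans hdvd
      have : (p : ℤ) ∣ 1 := by
        have h2 : (p : ℤ) ∣ p * m := Dvd.intro m rfl
        have := dvd_sub h2 hpdvd
        simpa using this
      have := Int.le_of_dvd one_pos this
      have hp2 : (2 : ℤ) ≤ p := by exact_mod_cast hp.two_le
      omega
  -- hence b ∈ M, so M = ⊤
  have hbM : b ∈ M := by
    rw [hπ, QuotientGroup.mk'_apply, QuotientGroup.eq_one_iff] at hπb
    exact hπb
  have hMtop : M = ⊤ := by
    rw [← top_le_iff, ← h1]
    rw [Subgroup.closure_le]
    intro w hw
    rcases hw with h | h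
    · rw [h]; exact Subgroup.mem_sup_left (Subgroup.mem_closure_singleton_self a)
    · rw [h]; exact M.pow_mem hbM p
  -- so <a> ⊔ commutator = ⊤, hence G cyclic, contradiction
  have : Subgroup.closure ({a} : Set G) = ⊤ :=
    sup_commutator_eq_top hnil (hM ▸ hMtop)
  exact not_cyclic hp hG hclass a this

/-- `⟨g⟩ Γ₂(G)` is proper. -/
lemma K_proper (g : G) :
    Subgroup.closure ({g} : Set G) ⊔ commutator G ≠ ⊤ := by
  intro htop
  apply J_proper hp hG hclass g g
  rw [← top_le_iff, ← htop]
  apply sup_le_sup_right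
  rw [Subgroup.closure_le]
  intro w hw
  rw [Set.mem_singleton_iff] at hw
  subst hw
  apply Subgroup.subset_closure
  exact Set.mem_insert _ _

/-- the commutator subgroup is proper -/
lemma commutator_proper : (commutator G) ≠ ⊤ := by
  intro htop
  have := K_proper hp hG hclass (1 : G)
  apply this
  rw [htop, sup_top_eq]

end Properness

/-! ### Basic toolkit -/

lemma pc_mem {H : Subgroup G} {a b : G} (ha : a ∈ H) (hb : b ∈ H) : pcomm a b ∈ H := by
  simp only [pcomm]
  exact H.mul_mem (H.mul_mem (H.mul_mem (H.inv_mem ha) (H.inv_mem hb)) ha) hb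

lemma pc_mem_commutator_right {z w : G} (hw : w ∈ commutator G) : pcomm z w ∈ commutator G := by
  have h1 : z⁻¹ * w⁻¹ * z ∈ commutator G := by
    have := (Subgroup.commutator_normal ⊤ ⊤).conj_mem w⁻¹ (inv_mem hw) z⁻¹
    simpa [commutator_def, mul_assoc] using this
  have : pcomm z w = (z⁻¹ * w⁻¹ * z) * w := by simp [pcomm, mul_assoc]
  rw [this]
  exact Subgroup.mul_mem _ h1 hw

/-- `Nice g` : `g` centralizes the commutator subgroup. -/
def Nice (g : G) : Prop := ∀ u ∈ commutator G, Commute g u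

lemma Nice.one : Nice (1 : G) := fun _ _ => Commute.one_left _

lemma Nice.mul {g h : G} (hg : Nice g) (hh : Nice h) : Nice (g * h) :=
  fun u hu => (hg u hu).mul_left (hh u hu)

lemma Nice.inv {g : G} (hg : Nice g) : Nice g⁻¹ := fun u hu => (hg u hu).inv_left

lemma Nice.pow {g : G} (hg : Nice g) (n : ℕ) : Nice (g ^ n) :=
  fun u hu => (hg u hu).pow_left n

lemma Nice.pc_right {g u : G} (hg : Nice g) (hu : u ∈ commutator G) : pcomm g u = 1 :=
  pc_eq_one_of_commute (hg u hu)

lemma Nice.pc_left {g u : G} (hg : Nice g) (hu : u ∈ commutator G) : pcomm u g = 1 :=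
  pc_eq_one_of_commute (hg u hu).symm

lemma cnj_one (h : G) : cnj 1 h = 1 := by simp [cnj]

lemma cnj_nice {g h : G} (hg : g ∈ commutator G) (hh : Nice h) : cnj g h = g := by
  rw [cnj_eq, pc_eq_one_of_commute (hh g hg).symm, mul_one]

/-- Hall–Witt identity. -/
lemma hall_witt (a b c : G) :
    cnj (pcomm (pcomm a b⁻¹) c) b * cnj (pcomm (pcomm b c⁻¹) a) c
      * cnj (pcomm (pcomm c a⁻¹) b) a = 1 := by
  simp only [pcomm, cnj]; group

lemma hw_first {g z x : G} (h2 : pcomm (pcomm z x⁻¹) g = 1) (h3 : pcomm x g⁻¹ = 1) :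
    pcomm (pcomm g z⁻¹) x = 1 := by
  have := hall_witt g z x
  rw [h2, h3, pc_one_left, cnj_one, cnj_one, mul_one, mul_one] at this
  have h4 : cnj (pcomm (pcomm g z⁻¹) x) z = 1 := this
  have h5 := congrArg (fun w => z * w * z⁻¹) h4
  simpa [cnj, mul_assoc] using h5

lemma hw_main {g z x : G} (h2 : pcomm (pcomm z⁻¹ x⁻¹) g = 1) (h3 : pcomm x g⁻¹ = 1) :
    pcomm (pcomm g z) x = 1 := by
  have := hw_first (z := z⁻¹) h2 h3
  rwa [inv_inv] at this

/-- HW-N : `Nice` propagates through commutators. -/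
lemma Nice.pc {g : G} (hg : Nice g) (z : G) : Nice (pcomm g z) := by
  intro u hu
  apply commute_of_pc_eq_one
  apply hw_main
  · have hm : pcomm z⁻¹ u⁻¹ ∈ commutator G := pc_mem_commutator_right (inv_mem hu)
    exact hg.pc_left hm
  · exact pc_eq_one_of_commute ((hg u hu).symm.inv_right)

/-- HW-C -/
lemma dead_pc {g x : G} (hg : Nice g) (hgx : Commute g x) (z : G) :
    pcomm (pcomm g z) x = 1 := by
  apply hw_main
  · have : pcomm z⁻¹ x⁻¹ ∈ commutator G := pc_mem_commutator _ _
    exact hg.pc_left this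
  · exact pc_eq_one_of_commute hgx.symm.inv_right

/-! ### class-3 exact power formulas -/

section PWR

lemma pc_pow_inner_right {e t : G} (hDt : Commute (pcomm e t) t) (N : ℕ) :
    pcomm e (t^N) = (pcomm e t)^N := by
  induction N with
  | zero => simp [pc_one_right]
  | succ N ih =>
    rw [pow_succ', pc_mul_right, ih, cnj_eq_self_of_commute (hDt.pow_right N), pow_succ]

lemma pc_pow_right {g t : G} (hDt : Commute (pcomm (pcomm g t) t) t)
    (hDe : Commute (pcomm (pcomm g t) t) (pcomm g t)) (N : ℕ) :
    pcomm g (t^N) = (pcomm g t)^N * (pcomm (pcomm g t) t)^(N.choose 2) := by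
  set e := pcomm g t with he
  set D := pcomm e t with hD
  induction N with
  | zero => simp [pc_one_right]
  | succ N ih =>
    have hsub : pcomm e (t^N) = D^N := pc_pow_inner_right hDt N
    rw [pow_succ', pc_mul_right, ih, cnj_eq, ← he, hsub]
    have hmove : D ^ N.choose 2 * e = e * D ^ N.choose 2 := (hDe.pow_left _).eq
    calc e ^ N * D ^ N.choose 2 * (e * D ^ N)
        = e ^ N * (D ^ N.choose 2 * e) * D ^ N := by group
    _ = e ^ N * (e * D ^ N.choose 2) * D ^ N := by rw [hmove]
    _ = e ^ (N+1) * (D ^ N.choose 2 * D ^ N) := by rw [pow_succ]; group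
    _ = e ^ (N+1) * D ^ ((N+1).choose 2) := by
          rw [← pow_add]
          congr 1
          rw [Nat.choose_succ_succ, Nat.choose_one_right, Nat.add_comm]

lemma pc_pow_inner_left {e g : G} (hDg : Commute (pcomm e g) g) (N : ℕ) :
    pcomm e (g^N) = (pcomm e g)^N := pc_pow_inner_right hDg N

lemma pc_pow_left {g t : G} (hDg : Commute (pcomm (pcomm g t) g) g)
    (hDe : Commute (pcomm (pcomm g t) g) (pcomm g t)) (N : ℕ) :
    pcomm (g^N) t = (pcomm g t)^N * (pcomm (pcomm g t) g)^(N.choose 2) := by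
  set e := pcomm g t with he
  set D := pcomm e g with hD
  induction N with
  | zero => simp [pc_one_left]
  | succ N ih =>
    have hsub : pcomm e (g^N) = D^N := pc_pow_inner_right hDg N
    rw [pow_succ', pc_mul_left, ih, cnj_eq, ← he, hsub]
    have hmove : D ^ N * e ^ N = e ^ N * D ^ N := ((hDe.pow_left N).pow_right N).eq
    calc e * D ^ N * (e ^ N * D ^ N.choose 2)
        = e * (D ^ N * e ^ N) * D ^ N.choose 2 := by group
    _ = e * (e ^ N * D ^ N) * D ^ N.choose 2 := by rw [hmove]
    _ = e ^ (N+1) * (D ^ N * D ^ N.choose 2) := by rw [pow_succ']; group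
    _ = e ^ (N+1) * D ^ ((N+1).choose 2) := by
          rw [← pow_add]
          congr 1
          rw [Nat.choose_succ_succ, Nat.choose_one_right]

/-- the `p+1` trick : if `[g, tᵖ] = 1` then `[g,t,t]ᵖ = 1` and (given `p ∣ C(p,2)`)
`[g,t]ᵖ = 1`. -/
lemma pt_trick {g t : G} {p : ℕ} (hdvd : p ∣ p.choose 2)
    (hDt : Commute (pcomm (pcomm g t) t) t)
    (hDe : Commute (pcomm (pcomm g t) t) (pcomm g t))
    (h1 : pcomm g (t^p) = 1) :
    (pcomm (pcomm g t) t)^p = 1 ∧ (pcomm g t)^p = 1 := by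
  set e := pcomm g t with he
  set D := pcomm e t with hD
  have E1 : (1 : G) = e^p * D^(p.choose 2) := h1 ▸ (pc_pow_right hDt hDe p)
  have E2 : pcomm g (t^(p+1)) = e^(p+1) * D^((p+1).choose 2) := pc_pow_right hDt hDe (p+1)
  have E3 : pcomm g (t^(p+1)) = e := by
    rw [pow_succ, pc_mul_right, h1, cnj_one, mul_one, he]
  have hch : (p+1).choose 2 = p.choose 2 + p := by
    rw [Nat.choose_succ_succ, Nat.choose_one_right, Nat.add_comm]
  have E4 : e = e^(p+1) * (D^(p.choose 2) * D^p) := by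
    rw [← pow_add, ← hch, ← E2, E3]
  have hDp : D^p = 1 := by
    have h6 : e = e * (e^p * D^(p.choose 2) * D^p) := by
      calc e = e^(p+1) * (D^(p.choose 2) * D^p) := E4
      _ = e * (e^p * D^(p.choose 2) * D^p) := by rw [pow_succ']; group
    rw [← E1, one_mul] at h6
    exact (left_eq_mul.mp h6)
  refine ⟨hDp, ?_⟩
  obtain ⟨k, hk⟩ := hdvd
  have hDC : D^(p.choose 2) = 1 := by
    rw [hk, pow_mul, hDp, one_pow]
  have := E1
  rw [hDC, mul_one] at this
  exact this.symm

/-- general relation : `[g,t,t]ᵖ = [[g,tᵖ],t]`. -/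
lemma ptgen {g t : G} {p : ℕ}
    (hDt : Commute (pcomm (pcomm g t) t) t)
    (hDe : Commute (pcomm (pcomm g t) t) (pcomm g t)) :
    (pcomm (pcomm g t) t)^p = pcomm (pcomm g (t^p)) t := by
  set e := pcomm g t with he
  set D := pcomm e t with hD
  set F := pcomm g (t^p) with hF
  have E1 : F = e^p * D^(p.choose 2) := pc_pow_right hDt hDe p
  have E2 : pcomm g (t^(p+1)) = e^(p+1) * D^((p+1).choose 2) := pc_pow_right hDt hDe (p+1)
  have E3 : pcomm g (t^(p+1)) = e * (F * pcomm F t) := by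
    rw [pow_succ, pc_mul_right, ← he, ← hF, cnj_eq]
  have hch : (p+1).choose 2 = p.choose 2 + p := by
    rw [Nat.choose_succ_succ, Nat.choose_one_right, Nat.add_comm]
  have key : e^(p+1) * (D^(p.choose 2) * D^p) = (e * e^p) * (D^(p.choose 2) * pcomm F t) := by
    rw [← pow_add, ← hch, ← E2, E3, E1]; group
  rw [← pow_succ'] at key
  exact mul_left_cancel (mul_left_cancel key)

end PWR

/-! ### The instantiated toolkit -/

/-- `⟨g⟩ Γ₂(G)` -/
def S1 (g : G) : Subgroup G := Subgroup.closure {g} ⊔ commutator G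

/-- `⟨a, c⟩ Γ₂(G)` -/
def S2 (a c : G) : Subgroup G := Subgroup.closure {a, c} ⊔ commutator G

lemma mem_S1_self (g : G) : g ∈ S1 g :=
  Subgroup.mem_sup_left (Subgroup.mem_closure_singleton_self g)

lemma commutator_le_S1 (g : G) : commutator G ≤ S1 g := le_sup_right

lemma mem_S2_left (a c : G) : a ∈ S2 a c :=
  Subgroup.mem_sup_left (Subgroup.subset_closure (Set.mem_insert _ _))

lemma mem_S2_right (a c : G) : c ∈ S2 a c :=
  Subgroup.mem_sup_left (Subgroup.subset_closure (Set.mem_insert_of_mem _ rfl))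

lemma commutator_le_S2 (a c : G) : commutator G ≤ S2 a c := le_sup_right

section Main

variable [Finite G] {p : ℕ} (hp : p.Prime) (hp3 : 3 ≤ p) (hG : IsPGroup p G)
  (hclass : (⊤ : Subgroup G).lowerCentralSeries 3 ≠ ⊥)
  (hproper : ∀ H : Subgroup G, H ≠ ⊤ → (⊤ : Subgroup H).lowerCentralSeries 3 = ⊥)

include hp hp3 hG hclass hproper

omit hG hclass hproper in
lemma pdvd_choose2 {n : ℕ} (hn : p ∣ n) : p ∣ n.choose 2 := by
  have heven : 2 * n.choose 2 = n * (n - 1) := by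
    rw [Nat.choose_two_right]
    rcases n with _ | m
    · simp
    · have he : 2 ∣ (m+1) * m := by
        rw [Nat.mul_comm]
        exact (Nat.even_mul_succ_self m).two_dvd
      simp only [Nat.add_sub_cancel]
      exact Nat.mul_div_cancel' he
  have h1 : p ∣ 2 * n.choose 2 := heven ▸ (hn.mul_right _)
  have hnd : ¬ p ∣ 2 := fun h => by
    have := Nat.le_of_dvd (by norm_num) h
    omega
  exact ((Nat.Prime.coprime_iff_not_dvd hp).mpr hnd).dvd_of_dvd_mul_left h1

omit hG hclass hproper in
lemma pdvd2 : p ∣ p.choose 2 := pdvd_choose2 hp hp3 dvd_rfl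

omit hp3 hproper in
lemma S1_proper (g : G) : S1 g ≠ ⊤ := K_proper hp hG hclass g

omit hp3 hproper in
lemma S2p_proper (a b : G) : S2 a (b^p) ≠ ⊤ := J_proper hp hG hclass a b

omit hp3 hproper in
lemma commutator_proper' : commutator G ≠ ⊤ := commutator_proper hp hG hclass

omit hp hp3 hG hclass in
lemma triple_central {H : Subgroup G} (hne : H ≠ ⊤) {a b c d : G}
    (ha : a ∈ H) (hb : b ∈ H) (hc : c ∈ H) (hd : d ∈ H) :
    Commute (pcomm (pcomm a b) c) d :=
  commute_of_pc_eq_one (quad_eq_one (hproper H hne) ha hb hc hd)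

omit hp hp3 hG hclass in
lemma nice_triple {H : Subgroup G} (hne : H ≠ ⊤) (hΓ : commutator G ≤ H) {a b c : G}
    (ha : a ∈ H) (hb : b ∈ H) (hc : c ∈ H) :
    Nice (pcomm (pcomm a b) c) :=
  fun u hu => triple_central hproper hne ha hb hc (hΓ hu)

omit hp3 in
/-- power formula `[g, tᴺ]` for `g` in the commutator subgroup. -/
lemma pwrK {g : G} (hg : g ∈ commutator G) (t : G) (N : ℕ) :
    pcomm g (t^N) = (pcomm g t)^N * (pcomm (pcomm g t) t)^(N.choose 2) := by
  have hne := S1_proper hp hG hclass t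
  have hgS : g ∈ S1 t := commutator_le_S1 t hg
  have htS : t ∈ S1 t := mem_S1_self t
  exact pc_pow_right
    (triple_central hproper hne hgS htS htS htS)
    (triple_central hproper hne hgS htS htS (pc_mem hgS htS)) N

omit hp3 in
/-- power formula `[gᴺ, t]` for `g` in the commutator subgroup. -/
lemma pwrK' {g : G} (hg : g ∈ commutator G) (t : G) (N : ℕ) :
    pcomm (g^N) t = (pcomm g t)^N * (pcomm (pcomm g t) g)^(N.choose 2) := by
  have hne := S1_proper hp hG hclass t
  have hgS : g ∈ S1 t := commutator_le_S1 t hg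
  have htS : t ∈ S1 t := mem_S1_self t
  exact pc_pow_left
    (triple_central hproper hne hgS htS hgS hgS)
    (triple_central hproper hne hgS htS hgS (pc_mem hgS htS)) N

/-- `p`-transfer : if `[g, tᵖ] = 1` with `g ∈ Γ₂` then `[g,t]ᵖ = 1` and `[g,t,t]ᵖ = 1`. -/
lemma ptK {g t : G} (hg : g ∈ commutator G) (h1 : pcomm g (t^p) = 1) :
    (pcomm g t)^p = 1 ∧ (pcomm (pcomm g t) t)^p = 1 := by
  have hne := S1_proper hp hG hclass t
  have hgS : g ∈ S1 t := commutator_le_S1 t hg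
  have htS : t ∈ S1 t := mem_S1_self t
  have h := pt_trick (pdvd2 hp hp3)
    (triple_central hproper hne hgS htS htS htS)
    (triple_central hproper hne hgS htS htS (pc_mem hgS htS)) h1
  exact ⟨h.2, h.1⟩

omit hp3 in
/-- `[g,t,t]ᵖ = [[g,tᵖ],t]` for `g ∈ Γ₂`. -/
lemma ptgenK {g : G} (hg : g ∈ commutator G) (t : G) :
    (pcomm (pcomm g t) t)^p = pcomm (pcomm g (t^p)) t := by
  have hne := S1_proper hp hG hclass t
  have hgS : g ∈ S1 t := commutator_le_S1 t hg
  have htS : t ∈ S1 t := mem_S1_self t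
  exact ptgen
    (triple_central hproper hne hgS htS htS htS)
    (triple_central hproper hne hgS htS htS (pc_mem hgS htS))

/-- the `σ`-lemma: if `g ∈ Γ₂` and `[g, wᵖ]` is Nice, then `[[g,w],g]ᵖ = 1`. -/
lemma sig {g : G} (hg : g ∈ commutator G) {w : G} (hn : Nice (pcomm g (w^p))) :
    (pcomm (pcomm g w) g)^p = 1 := by
  set e := pcomm g w with he
  set τ := pcomm e g with hτ
  have hnew := S1_proper hp hG hclass w
  have hgS : g ∈ S1 w := commutator_le_S1 w hg
  have hwS : w ∈ S1 w := mem_S1_self w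
  -- y₁ := [g,w,w] is Nice and commutes with w
  have hy₁nice : Nice (pcomm (pcomm g w) w) :=
    nice_triple hproper hnew (commutator_le_S1 w) hgS hwS hwS
  -- step 1 : 1 = [[g,wᵖ], g]
  have h1 : pcomm (pcomm g (w^p)) g = 1 := hn.pc_right hg
  -- step 2 : expand [g, wᵖ]
  have h2 : pcomm g (w^p) = e^p * (pcomm e w)^(p.choose 2) :=
    pwrK hp hG hclass hproper hg w p
  -- step 3 : conclude 1 = [eᵖ, g]
  have h3 : pcomm (e^p) g = 1 := by
    have heΓ : pcomm (e^p) g ∈ commutator G := pc_mem_commutator _ _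
    have hY : Nice ((pcomm e w)^(p.choose 2)) := hy₁nice.pow _
    have := h1
    rw [h2, pc_mul_left] at this
    rw [hY.pc_right hg, mul_one] at this
    rwa [cnj_nice heΓ hY] at this
  -- step 4 : expand [eᵖ, g] in Γ₂
  have heΓ : e ∈ commutator G := pc_mem_commutator _ _
  have h4 : pcomm (e^p) g = τ^p * (pcomm τ e)^(p.choose 2) :=
    pwrK' hp hG hclass hproper heΓ g p
  have hτnice : Nice τ := nice_triple hproper hnew (commutator_le_S1 w) hgS hwS hgS
  have h5 : pcomm τ e = 1 := hτnice.pc_right heΓ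
  rw [h4, h5, one_pow, mul_one] at h3
  exact h3

/-- `σ`-lemma for `g = [α,β]` a single commutator with `α ∈ Γ₂`. -/
lemma sig' {α : G} (hα : α ∈ commutator G) (β w : G) :
    (pcomm (pcomm (pcomm α β) w) (pcomm α β))^p = 1 := by
  apply sig hp hp3 hG hclass hproper (pc_mem_commutator α β)
  exact nice_triple hproper (S2p_proper hp hG hclass β w) (commutator_le_S2 _ _)
    (commutator_le_S2 _ _ hα) (mem_S2_left _ _) (mem_S2_right _ _)

/-! ### Dead elements -/

omit hp hp3 hG hclass hproper in
lemma dead_mul {x g h : G} (hg : Nice g ∧ Commute g x) (hh : Nice h ∧ Commute h x) :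
    Nice (g*h) ∧ Commute (g*h) x := ⟨hg.1.mul hh.1, hg.2.mul_left hh.2⟩

omit hp hp3 hG hclass hproper in
lemma dead_pow {x g : G} (hg : Nice g ∧ Commute g x) (k : ℕ) :
    Nice (g^k) ∧ Commute (g^k) x := ⟨hg.1.pow k, hg.2.pow_left k⟩

omit hp hp3 hG hclass hproper in
lemma dead_pcz {x g : G} (hg : Nice g ∧ Commute g x) (z : G) :
    Nice (pcomm g z) ∧ Commute (pcomm g z) x :=
  ⟨hg.1.pc z, commute_of_pc_eq_one (dead_pc hg.1 hg.2 z)⟩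

/-- the `Ξ`-lemma: `[[[α,x],z],x]ᵖ = 1` for `α ∈ Γ₂`. -/
lemma xi {α : G} (hα : α ∈ commutator G) (x z : G) :
    (pcomm (pcomm (pcomm α x) z) x)^p = 1 := by
  set β := pcomm α x with hβdef
  have hβ : β ∈ commutator G := pc_mem_commutator _ _
  have hM := S2p_proper hp hG hclass x z
  have hαM : α ∈ S2 x (z^p) := commutator_le_S2 _ _ hα
  have hxM : x ∈ S2 x (z^p) := mem_S2_left _ _
  have hzM : z^p ∈ S2 x (z^p) := mem_S2_right _ _
  have hquad : pcomm (pcomm β (z^p)) x = 1 :=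
    quad_eq_one (hproper _ hM) hαM hxM hzM hxM
  set e₀ := pcomm β z with he₀
  set D₀ := pcomm e₀ z with hD₀
  have hpwr : pcomm β (z^p) = e₀^p * D₀^(p.choose 2) :=
    pwrK hp hG hclass hproper hβ z p
  set ν := pcomm β (z^p) with hν
  have hνnice : Nice ν := nice_triple hproper hM (commutator_le_S2 _ _) hαM hxM hzM
  have hνx : Commute ν x := triple_central hproper hM hαM hxM hzM hxM
  have hDgen : D₀^p = pcomm ν z := ptgenK hp hG hclass hproper hβ z
  obtain ⟨A, hA⟩ := pdvd2 hp hp3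
  have hDdead : Nice (D₀^(p.choose 2)) ∧ Commute (D₀^(p.choose 2)) x := by
    rw [hA, pow_mul, hDgen]
    exact dead_pow (dead_pcz ⟨hνnice, hνx⟩ z) A
  have h3 : pcomm (e₀^p) x = 1 := by
    have h := hquad
    rw [hpwr, pc_mul_left] at h
    rw [pc_eq_one_of_commute hDdead.2] at h
    rwa [cnj_nice (pc_mem_commutator _ _) hDdead.1, mul_one] at h
  have h4 : pcomm (e₀^p) x
      = (pcomm e₀ x)^p * (pcomm (pcomm e₀ x) e₀)^(p.choose 2) :=
    pwrK' hp hG hclass hproper (pc_mem_commutator _ _) x p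
  have hsig : (pcomm (pcomm e₀ x) e₀)^p = 1 := by
    have := sig' hp hp3 hG hclass hproper hβ z x
    rw [← he₀] at this
    exact this
  have hsig2 : (pcomm (pcomm e₀ x) e₀)^(p.choose 2) = 1 := by
    rw [hA, pow_mul, hsig, one_pow]
  rw [h4, hsig2, mul_one] at h3
  exact h3

/-- `[[v,x],z]ᵖ` is Nice, for `v ∈ Γ₂`. -/
lemma spz_pow_nice {v : G} (hv : v ∈ commutator G) (x z : G) :
    Nice ((pcomm (pcomm v x) z)^p) := by
  set s := pcomm v x with hsdef
  have hs : s ∈ commutator G := pc_mem_commutator _ _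
  have hpwr : pcomm s (z^p) = (pcomm s z)^p * (pcomm (pcomm s z) z)^(p.choose 2) :=
    pwrK hp hG hclass hproper hs z p
  have hM := S2p_proper hp hG hclass x z
  have hν : Nice (pcomm s (z^p)) :=
    nice_triple hproper hM (commutator_le_S2 _ _) (commutator_le_S2 _ _ hv)
      (mem_S2_left _ _) (mem_S2_right _ _)
  have hDgen : (pcomm (pcomm s z) z)^p = pcomm (pcomm s (z^p)) z :=
    ptgenK hp hG hclass hproper hs z
  obtain ⟨A, hA⟩ := pdvd2 hp hp3
  have hDnice : Nice ((pcomm (pcomm s z) z)^(p.choose 2)) := by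
    rw [hA, pow_mul, hDgen]
    exact (hν.pc z).pow A
  have hkey : (pcomm s z)^p = pcomm s (z^p) * ((pcomm (pcomm s z) z)^(p.choose 2))⁻¹ := by
    rw [hpwr]; group
  rw [hkey]
  exact hν.mul hDnice.inv

/-! ### collection -/

omit hp hp3 hG hclass hproper in
lemma swap_base (a b : G) : a * b = b * a * pcomm a b := by
  simp only [pcomm]; group

omit hp hp3 hG hclass hproper in
lemma swap_one {s v n : G} (hn : s * v = v * s * n) (hnv : Commute n v) (j : ℕ) :
    s * v^j = v^j * s * n^j := by
  induction j with
  | zero => simp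
  | succ j ih =>
    calc s * v^(j+1) = (s * v) * v^j := by group
    _ = v * s * (n * v^j) := by rw [hn]; group
    _ = v * s * (v^j * n) := by rw [(hnv.pow_right j).eq]
    _ = v * (s * v^j) * n := by group
    _ = v * (v^j * s * n^j) * n := by rw [ih]
    _ = v^(j+1) * s * n^(j+1) := by group

omit hp hp3 hG hclass hproper in
lemma swap_pow {s v n : G} (hn : s * v = v * s * n) (hns : Commute n s) (hnv : Commute n v)
    (i j : ℕ) : s^i * v^j = v^j * s^i * n^(i*j) := by
  induction i with
  | zero => simp
  | succ i ih =>
    calc s^(i+1) * v^j = s^i * (s * v^j) := by group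
    _ = s^i * (v^j * s * n^j) := by rw [swap_one hn hnv j]
    _ = (s^i * v^j) * s * n^j := by group
    _ = v^j * s^i * (n^(i*j) * s) * n^j := by rw [ih]; group
    _ = v^j * s^i * (s * n^(i*j)) * n^j := by rw [(hns.pow_left (i*j)).eq]
    _ = v^j * s^(i+1) * (n^(i*j) * n^j) := by group
    _ = v^j * s^(i+1) * n^((i+1)*j) := by
          rw [← pow_add]
          congr 1
          ring

omit hp hp3 hG hclass hproper in
lemma reorder {v s m n : G}
    (hsv : ∀ i j : ℕ, s^i * v^j = v^j * s^i * n^(i*j))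
    (hmv : Commute m v) (hms : Commute m s) (hnm : Commute n m)
    (hns : Commute n s) (k bk ck : ℕ) :
    v * (s^k * m^(k.choose 2)) * (v^k * s^(k.choose 2) * m^bk * n^ck)
      = v^(k+1) * s^((k+1).choose 2) * m^(k.choose 2 + bk) * n^(k*k + ck) := by
  have c1 : m^(k.choose 2) * v^k = v^k * m^(k.choose 2) :=
    ((hmv.pow_left _).pow_right _).eq
  have c2 : m^(k.choose 2) * s^(k.choose 2) = s^(k.choose 2) * m^(k.choose 2) :=
    ((hms.pow_left _).pow_right _).eq
  have c3 : n^(k*k) * s^(k.choose 2) = s^(k.choose 2) * n^(k*k) :=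
    ((hns.pow_left _).pow_right _).eq
  have c4 : n^(k*k) * m^(k.choose 2 + bk) = m^(k.choose 2 + bk) * n^(k*k) :=
    ((hnm.pow_left _).pow_right _).eq
  have hch : (k+1).choose 2 = k + k.choose 2 := by
    rw [Nat.choose_succ_succ, Nat.choose_one_right]
  calc v * (s^k * m^(k.choose 2)) * (v^k * s^(k.choose 2) * m^bk * n^ck)
      = v * s^k * (m^(k.choose 2) * v^k) * s^(k.choose 2) * m^bk * n^ck := by group
  _ = v * s^k * (v^k * m^(k.choose 2)) * s^(k.choose 2) * m^bk * n^ck := by rw [c1]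
  _ = v * (s^k * v^k) * (m^(k.choose 2) * s^(k.choose 2)) * m^bk * n^ck := by group
  _ = v * (v^k * s^k * n^(k*k)) * (s^(k.choose 2) * m^(k.choose 2)) * m^bk * n^ck := by
        rw [hsv k k, c2]
  _ = v^(k+1) * s^k * (n^(k*k) * s^(k.choose 2)) * (m^(k.choose 2) * m^bk) * n^ck := by group
  _ = v^(k+1) * s^k * (s^(k.choose 2) * n^(k*k)) * m^(k.choose 2 + bk) * n^ck := by
        rw [c3, ← pow_add]
  _ = v^(k+1) * (s^k * s^(k.choose 2)) * (n^(k*k) * m^(k.choose 2 + bk)) * n^ck := by group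
  _ = v^(k+1) * s^(k + k.choose 2) * (m^(k.choose 2 + bk) * n^(k*k)) * n^ck := by
        rw [c4, ← pow_add]
  _ = v^(k+1) * s^(k + k.choose 2) * m^(k.choose 2 + bk) * (n^(k*k) * n^ck) := by group
  _ = v^(k+1) * s^((k+1).choose 2) * m^(k.choose 2 + bk) * n^(k*k + ck) := by
        rw [← pow_add, hch]

omit hp hp3 hG hclass hproper in
lemma reorder2 {v s m n : G}
    (hsv : ∀ i j : ℕ, s^i * v^j = v^j * s^i * n^(i*j))
    (hmv : Commute m v) (hms : Commute m s) (hnm : Commute n m)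
    (hns : Commute n s) (hnv : Commute n v) (k bk ck : ℕ) :
    (v^k * s^(k.choose 2) * m^bk * n^ck) * (v * (s^k * m^(k.choose 2)))
      = v^(k+1) * s^((k+1).choose 2) * m^(bk + k.choose 2) * n^(ck + k.choose 2) := by
  have c0 : s^(k.choose 2) * v^1 = v^1 * s^(k.choose 2) * n^(k.choose 2 * 1) := hsv _ 1
  rw [pow_one, Nat.mul_one] at c0
  have c1 : n^ck * v = v * n^ck := (hnv.pow_left _).eq
  have c2 : m^bk * v = v * m^bk := (hmv.pow_left _).eq
  have c3 : n^(k.choose 2) * m^bk = m^bk * n^(k.choose 2) := ((hnm.pow_left _).pow_right _).eq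
  have c4 : n^(k.choose 2 + ck) * s^k = s^k * n^(k.choose 2 + ck) := ((hns.pow_left _).pow_right _).eq
  have c5 : m^bk * s^k = s^k * m^bk := ((hms.pow_left _).pow_right _).eq
  have hch : (k+1).choose 2 = k + k.choose 2 := by
    rw [Nat.choose_succ_succ, Nat.choose_one_right]
  calc (v^k * s^(k.choose 2) * m^bk * n^ck) * (v * (s^k * m^(k.choose 2)))
      = v^k * s^(k.choose 2) * m^bk * (n^ck * v) * s^k * m^(k.choose 2) := by group
  _ = v^k * s^(k.choose 2) * (m^bk * v) * n^ck * s^k * m^(k.choose 2) := by rw [c1]; group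
  _ = v^k * (s^(k.choose 2) * v) * m^bk * n^ck * s^k * m^(k.choose 2) := by rw [c2]; group
  _ = v^k * (v * s^(k.choose 2) * n^(k.choose 2)) * m^bk * n^ck * s^k * m^(k.choose 2) := by
        rw [c0]
  _ = v^(k+1) * s^(k.choose 2) * (n^(k.choose 2) * m^bk) * n^ck * s^k * m^(k.choose 2) := by
        group
  _ = v^(k+1) * s^(k.choose 2) * m^bk * (n^(k.choose 2) * n^ck) * s^k * m^(k.choose 2) := by
        rw [c3]; group
  _ = v^(k+1) * s^(k.choose 2) * m^bk * (n^(k.choose 2 + ck) * s^k) * m^(k.choose 2) := by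
        rw [← pow_add]; group
  _ = v^(k+1) * s^(k.choose 2) * (m^bk * s^k) * n^(k.choose 2 + ck) * m^(k.choose 2) := by
        rw [c4]; group
  _ = v^(k+1) * (s^(k.choose 2) * s^k) * m^bk * (n^(k.choose 2 + ck) * m^(k.choose 2)) := by
        rw [c5]; group
  _ = v^(k+1) * s^(k.choose 2 + k) * m^bk * (m^(k.choose 2) * n^(k.choose 2 + ck)) := by
        rw [← pow_add, ((hnm.pow_left _).pow_right _).eq]
  _ = v^(k+1) * s^((k+1).choose 2) * (m^bk * m^(k.choose 2)) * n^(ck + k.choose 2) := by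
        rw [hch]
        have : k.choose 2 + k = k + k.choose 2 := by ring
        rw [this]
        have h2 : k.choose 2 + ck = ck + k.choose 2 := by ring
        rw [h2]
        group
  _ = v^(k+1) * s^((k+1).choose 2) * m^(bk + k.choose 2) * n^(ck + k.choose 2) := by
        rw [← pow_add]

omit hp3 in
lemma collect_left (x y : G) (k : ℕ) :
    ∃ b c : ℕ,
      pcomm (x^k) y
        = (pcomm x y)^k * (pcomm (pcomm x y) x)^(k.choose 2)
          * (pcomm (pcomm (pcomm x y) x) x)^b
          * (pcomm (pcomm (pcomm x y) x) (pcomm x y))^c := by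
  set v := pcomm x y with hv0
  set s := pcomm v x with hs0
  set m := pcomm s x with hm0
  set n := pcomm s v with hn0
  have hv : v ∈ commutator G := pc_mem_commutator _ _
  have hvS : v ∈ S1 x := commutator_le_S1 x hv
  have hxS : x ∈ S1 x := mem_S1_self x
  have hsS : s ∈ S1 x := pc_mem hvS hxS
  have hmS : m ∈ S1 x := pc_mem hsS hxS
  have hnS : n ∈ S1 x := pc_mem hsS hvS
  have hne := S1_proper hp hG hclass x
  have hmall : ∀ w, w ∈ S1 x → Commute m w := fun w hw =>
    triple_central hproper hne hvS hxS hxS hw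
  have hnall : ∀ w, w ∈ S1 x → Commute n w := fun w hw =>
    triple_central hproper hne hvS hxS hvS hw
  have hsub : ∀ j : ℕ, pcomm v (x^j) = s^j * m^(j.choose 2) := fun j =>
    pwrK hp hG hclass hproper hv x j
  have hbase : s * v = v * s * n := swap_base s v
  have hswap := swap_pow hbase (hnall s hsS) (hnall v hvS)
  induction k with
  | zero => exact ⟨0, 0, by simp [pc_one_left]⟩
  | succ k ih =>
    obtain ⟨b, c, hk⟩ := ih
    refine ⟨k.choose 2 + b, k*k + c, ?_⟩
    have hstep : pcomm (x^(k+1)) y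
        = v * (s^k * m^(k.choose 2)) * pcomm (x^k) y := by
      rw [pow_succ', pc_mul_left, cnj_eq, ← hv0, hsub k]

    rw [hstep, hk]
    exact reorder hswap (hmall v hvS) (hmall s hsS) (hnall m hmS) (hnall s hsS) k b c

omit hp3 in
lemma collect_right (x y : G) (k : ℕ) :
    ∃ b c : ℕ,
      pcomm y (x^k)
        = (pcomm y x)^k * (pcomm (pcomm y x) x)^(k.choose 2)
          * (pcomm (pcomm (pcomm y x) x) x)^b
          * (pcomm (pcomm (pcomm y x) x) (pcomm y x))^c := by
  set v := pcomm y x with hv0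
  set s := pcomm v x with hs0
  set m := pcomm s x with hm0
  set n := pcomm s v with hn0
  have hv : v ∈ commutator G := pc_mem_commutator _ _
  have hvS : v ∈ S1 x := commutator_le_S1 x hv
  have hxS : x ∈ S1 x := mem_S1_self x
  have hsS : s ∈ S1 x := pc_mem hvS hxS
  have hmS : m ∈ S1 x := pc_mem hsS hxS
  have hnS : n ∈ S1 x := pc_mem hsS hvS
  have hne := S1_proper hp hG hclass x
  have hmall : ∀ w, w ∈ S1 x → Commute m w := fun w hw =>
    triple_central hproper hne hvS hxS hxS hw
  have hnall : ∀ w, w ∈ S1 x → Commute n w := fun w hw =>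
    triple_central hproper hne hvS hxS hvS hw
  have hsub : ∀ j : ℕ, pcomm v (x^j) = s^j * m^(j.choose 2) := fun j =>
    pwrK hp hG hclass hproper hv x j
  have hbase : s * v = v * s * n := swap_base s v
  have hswap := swap_pow hbase (hnall s hsS) (hnall v hvS)
  induction k with
  | zero => exact ⟨0, 0, by simp [pc_one_right]⟩
  | succ k ih =>
    obtain ⟨b, c, hk⟩ := ih
    refine ⟨b + k.choose 2, c + k.choose 2, ?_⟩
    have hstep : pcomm y (x^(k+1))
        = pcomm y (x^k) * (v * (s^k * m^(k.choose 2))) := by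
      rw [pow_succ', pc_mul_right, cnj_eq, ← hv0, hsub k]

    rw [hstep, hk]
    exact reorder2 hswap (hmall v hvS) (hmall s hsS) (hnall m hmS) (hnall s hsS)
      (hnall v hvS) k b c

omit hp hp3 hG hclass hproper in
lemma pc_mul_left_simplify {P Q t : G} (hQ : pcomm Q t = 1)
    (hPQ : pcomm (pcomm P t) Q = 1) :
    pcomm (P*Q) t = pcomm P t := by
  rw [pc_mul_left, hQ, mul_one, cnj_eq, hPQ, mul_one]

/-- if `g ∈ Γ₂` is Nice and `[g, xᵖ] = 1` then `gᵖ` commutes with `x`. -/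
lemma dead_powp {g : G} (hg : g ∈ commutator G) (hnice : Nice g) {x : G}
    (hq : pcomm g (x^p) = 1) : Commute (g^p) x := by
  have h1 : (pcomm g x)^p = 1 := (ptK hp hp3 hG hclass hproper hg hq).1
  have h2 : pcomm (g^p) x
      = (pcomm g x)^p * (pcomm (pcomm g x) g)^(p.choose 2) :=
    pwrK' hp hG hclass hproper hg x p
  have h3 : pcomm (pcomm g x) g = 1 := (hnice.pc x).pc_right hg
  rw [h1, h3, one_pow, one_mul] at h2
  exact commute_of_pc_eq_one h2

lemma dead_powN {g : G} (hg : g ∈ commutator G) (hnice : Nice g) {x : G}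
    (hq : pcomm g (x^p) = 1) {N : ℕ} (hN : p ∣ N) : Commute (g^N) x := by
  obtain ⟨k, rfl⟩ := hN
  rw [pow_mul]
  exact (dead_powp hp hp3 hG hclass hproper hg hnice hq).pow_left k

/-- the `z = x` case, in collected form. -/
lemma gen_zx {v : G} (hv : v ∈ commutator G) (x t : G) (b c : ℕ) :
    pcomm (pcomm (v^p * (pcomm v x)^(p.choose 2)
        * (pcomm (pcomm v x) x)^b * (pcomm (pcomm v x) v)^c) x) t
      = (pcomm (pcomm v x) t)^p := by
  set s := pcomm v x with hs0
  set m := pcomm s x with hm0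
  set n := pcomm s v with hn0
  have hvS : v ∈ S1 x := commutator_le_S1 x hv
  have hxS : x ∈ S1 x := mem_S1_self x
  have hsS : s ∈ S1 x := pc_mem hvS hxS
  have hne := S1_proper hp hG hclass x
  have hmall : ∀ w, w ∈ S1 x → Commute m w := fun w hw =>
    triple_central hproper hne hvS hxS hxS hw
  have hnall : ∀ w, w ∈ S1 x → Commute n w := fun w hw =>
    triple_central hproper hne hvS hxS hvS hw
  have hmnice : Nice m := fun u hu => hmall u (commutator_le_S1 x hu)
  have hnnice : Nice n := fun u hu => hnall u (commutator_le_S1 x hu)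
  have hsΓ : s ∈ commutator G := pc_mem_commutator _ _
  have hmΓ : m ∈ commutator G := pc_mem_commutator _ _
  have hnΓ : n ∈ commutator G := pc_mem_commutator _ _
  -- Step 1 : [U, x] = s^p * n^C * m^C
  have h1 : pcomm (v^p) x = s^p * n^(p.choose 2) :=
    pwrK' hp hG hclass hproper hv x p
  have h2 : pcomm (s^(p.choose 2)) x = m^(p.choose 2) := by
    have h := pwrK' hp hG hclass hproper hsΓ x (p.choose 2)
    rw [pc_eq_one_of_commute (hmall s hsS), one_pow, mul_one] at h
    exact h
  have h3 : pcomm (m^b) x = 1 := pc_eq_one_of_commute ((hmall x hxS).pow_left b)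
  have h4 : pcomm (n^c) x = 1 := pc_eq_one_of_commute ((hnall x hxS).pow_left c)
  have hAB : pcomm (v^p * s^(p.choose 2)) x = s^p * n^(p.choose 2) * m^(p.choose 2) := by
    rw [pc_mul_left, h1, h2]
    have hcomm1 : Commute (s^p * n^(p.choose 2)) (s^(p.choose 2)) :=
      (((Commute.refl s).pow_pow p _).mul_left
        (((hnall s hsS)).pow_pow (p.choose 2) (p.choose 2)))
    rw [cnj_eq_self_of_commute hcomm1]
  have hABC : pcomm (v^p * s^(p.choose 2) * m^b) x
      = s^p * n^(p.choose 2) * m^(p.choose 2) := by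
    rw [pc_mul_left_simplify h3 _, hAB]
    rw [hAB]
    exact pc_eq_one_of_commute
      ((((hmall s hsS).symm.pow_pow p b).mul_left
        ((hmall n (pc_mem hsS hvS)).symm.pow_pow _ b)).mul_left
        (((Commute.refl m).pow_pow _ b)))
  have hU : pcomm (v^p * s^(p.choose 2) * m^b * n^c) x
      = s^p * n^(p.choose 2) * m^(p.choose 2) := by
    rw [pc_mul_left_simplify h4 _, hABC]
    rw [hABC]
    exact pc_eq_one_of_commute
      ((((hnall s hsS).symm.pow_pow p c).mul_left
        (((Commute.refl n).pow_pow _ c))).mul_left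
        ((hnall m (pc_mem hsS hxS)).symm.pow_pow _ c))
  rw [hU]
  -- Step 2 : bracket with t
  have hMprop := S2p_proper hp hG hclass x t
  have hq_n : pcomm n (t^p) = 1 :=
    quad_eq_one (hproper _ hMprop) (commutator_le_S2 _ _ hv)
      (mem_S2_left _ _) (commutator_le_S2 _ _ hv) (mem_S2_right _ _)
  have hq_m : pcomm m (t^p) = 1 :=
    quad_eq_one (hproper _ hMprop) (commutator_le_S2 _ _ hv)
      (mem_S2_left _ _) (mem_S2_left _ _) (mem_S2_right _ _)
  have hnt : pcomm (n^(p.choose 2)) t = 1 :=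
    pc_eq_one_of_commute
      (dead_powN hp hp3 hG hclass hproper hnΓ hnnice hq_n (pdvd2 hp hp3))
  have hmt : pcomm (m^(p.choose 2)) t = 1 :=
    pc_eq_one_of_commute
      (dead_powN hp hp3 hG hclass hproper hmΓ hmnice hq_m (pdvd2 hp hp3))
  have hst : pcomm (s^p) t = (pcomm s t)^p := by
    have h := pwrK' hp hG hclass hproper hsΓ t p
    have hsig : (pcomm (pcomm s t) s)^p = 1 := sig' hp hp3 hG hclass hproper hv x t
    obtain ⟨A, hA⟩ := pdvd2 hp hp3
    have : (pcomm (pcomm s t) s)^(p.choose 2) = 1 := by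
      rw [hA, pow_mul, hsig, one_pow]
    rw [this, mul_one] at h
    exact h
  have step1 : pcomm (s^p * n^(p.choose 2) * m^(p.choose 2)) t
      = pcomm (s^p * n^(p.choose 2)) t := by
    apply pc_mul_left_simplify hmt
    exact (hmnice.pow _).pc_left (pc_mem_commutator _ _)
  have step2 : pcomm (s^p * n^(p.choose 2)) t = pcomm (s^p) t := by
    apply pc_mul_left_simplify hnt
    exact (hnnice.pow _).pc_left (pc_mem_commutator _ _)
  rw [step1, step2, hst]

/-- the `t = x` case, in collected form. -/
lemma gen_tx {v : G} (hv : v ∈ commutator G) (x z : G) (b c : ℕ) :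
    pcomm (pcomm (v^p * (pcomm v x)^(p.choose 2)
        * (pcomm (pcomm v x) x)^b * (pcomm (pcomm v x) v)^c) z) x
      = (pcomm (pcomm v z) x)^p := by
  obtain ⟨A, hA⟩ := pdvd2 hp hp3
  set s := pcomm v x with hs0
  set m := pcomm s x with hm0
  set n := pcomm s v with hn0
  set q := pcomm v z with hq0
  set ρ := pcomm q v with hρ0
  set χ := pcomm q s with hχ0
  have hvSx : v ∈ S1 x := commutator_le_S1 x hv
  have hxSx : x ∈ S1 x := mem_S1_self x
  have hsSx : s ∈ S1 x := pc_mem hvSx hxSx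
  have hnex := S1_proper hp hG hclass x
  have hmall : ∀ w, w ∈ S1 x → Commute m w := fun w hw =>
    triple_central hproper hnex hvSx hxSx hxSx hw
  have hnall : ∀ w, w ∈ S1 x → Commute n w := fun w hw =>
    triple_central hproper hnex hvSx hxSx hvSx hw
  have hmnice : Nice m := fun u hu => hmall u (commutator_le_S1 x hu)
  have hnnice : Nice n := fun u hu => hnall u (commutator_le_S1 x hu)
  have hsΓ : s ∈ commutator G := pc_mem_commutator _ _
  have hmΓ : m ∈ commutator G := pc_mem_commutator _ _
  have hnΓ : n ∈ commutator G := pc_mem_commutator _ _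
  have hqΓ : q ∈ commutator G := pc_mem_commutator _ _
  have hρΓ : ρ ∈ commutator G := pc_mem_commutator _ _
  have hχΓ : χ ∈ commutator G := pc_mem_commutator _ _
  have hszΓ : pcomm s z ∈ commutator G := pc_mem_commutator _ _
  -- facts in S1 z
  have hnez := S1_proper hp hG hclass z
  have hvSz : v ∈ S1 z := commutator_le_S1 z hv
  have hzSz : z ∈ S1 z := mem_S1_self z
  have hρnice : Nice ρ :=
    nice_triple hproper hnez (commutator_le_S1 z) hvSz hzSz hvSz
  have hχnice : Nice χ :=
    nice_triple hproper hnez (commutator_le_S1 z) hvSz hzSz (commutator_le_S1 z hsΓ)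
  -- quadruple facts in S2 z (x^p)
  have hMzx := S2p_proper hp hG hclass z x
  have hqρ : pcomm ρ (x^p) = 1 :=
    quad_eq_one (hproper _ hMzx) (commutator_le_S2 _ _ hv) (mem_S2_left _ _)
      (commutator_le_S2 _ _ hv) (mem_S2_right _ _)
  have hqχ : pcomm χ (x^p) = 1 :=
    quad_eq_one (hproper _ hMzx) (commutator_le_S2 _ _ hv) (mem_S2_left _ _)
      (commutator_le_S2 _ _ hsΓ) (mem_S2_right _ _)
  have hρpx : Commute (ρ^p) x := dead_powp hp hp3 hG hclass hproper hρΓ hρnice hqρ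
  have hχpx : Commute (χ^p) x := dead_powp hp hp3 hG hclass hproper hχΓ hχnice hqχ
  have hρCx : Commute (ρ^(p.choose 2)) x := by
    rw [hA, pow_mul]; exact hρpx.pow_left A
  have hρCnice : Nice (ρ^(p.choose 2)) := hρnice.pow _
  -- Step A1
  have h1 : pcomm (v^p) z = q^p * ρ^(p.choose 2) :=
    pwrK' hp hG hclass hproper hv z p
  -- Step A3a : [s^C, z] = T
  have hsig_z : (pcomm (pcomm s z) s)^p = 1 := sig' hp hp3 hG hclass hproper hv x z
  have hCC : p ∣ (p.choose 2).choose 2 := pdvd_choose2 hp hp3 (pdvd2 hp hp3)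
  have hT : pcomm (s^(p.choose 2)) z = (pcomm s z)^(p.choose 2) := by
    have h := pwrK' hp hG hclass hproper hsΓ z (p.choose 2)
    obtain ⟨B, hB⟩ := hCC
    have h2 : (pcomm (pcomm s z) s)^((p.choose 2).choose 2) = 1 := by
      rw [hB, pow_mul, hsig_z, one_pow]
    rw [h2, mul_one] at h
    exact h
  -- T is Nice and commutes with x
  have hTnice : Nice ((pcomm s z)^(p.choose 2)) := by
    rw [hA, pow_mul]
    exact (spz_pow_nice hp hp3 hG hclass hproper hv x z).pow A
  have hTx : Commute ((pcomm s z)^(p.choose 2)) x := by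
    have h := pwrK' hp hG hclass hproper hszΓ x (p.choose 2)
    have hκ : (pcomm (pcomm s z) x)^p = 1 := xi hp hp3 hG hclass hproper hv x z
    have hκC : (pcomm (pcomm s z) x)^(p.choose 2) = 1 := by
      rw [hA, pow_mul, hκ, one_pow]
    have hsig2 : (pcomm (pcomm (pcomm s z) x) (pcomm s z))^p = 1 :=
      sig' hp hp3 hG hclass hproper hsΓ z x
    obtain ⟨B, hB⟩ := hCC
    have hsig2C : (pcomm (pcomm (pcomm s z) x) (pcomm s z))^((p.choose 2).choose 2) = 1 := by
      rw [hB, pow_mul, hsig2, one_pow]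
    rw [hκC, hsig2C, one_mul] at h
    exact commute_of_pc_eq_one h
  -- A3d/e : [m^b, z] and [n^c, z]
  have hmz : pcomm (m^b) z = (pcomm m z)^b := by
    have h := pwrK' hp hG hclass hproper hmΓ z b
    rw [(hmnice.pc z).pc_right hmΓ, one_pow, mul_one] at h
    exact h
  have hnz : pcomm (n^c) z = (pcomm n z)^c := by
    have h := pwrK' hp hG hclass hproper hnΓ z c
    rw [(hnnice.pc z).pc_right hnΓ, one_pow, mul_one] at h
    exact h
  have hmz_nice : Nice ((pcomm m z)^b) := (hmnice.pc z).pow b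
  have hnz_nice : Nice ((pcomm n z)^c) := (hnnice.pc z).pow c
  have hmz_x : Commute ((pcomm m z)^b) x :=
    (commute_of_pc_eq_one (dead_pc hmnice (hmall x hxSx) z)).pow_left b
  have hnz_x : Commute ((pcomm n z)^c) x :=
    (commute_of_pc_eq_one (dead_pc hnnice (hnall x hxSx) z)).pow_left c
  -- ν := m^b * n^c is Nice
  have hνnice : Nice (m^b * n^c) := (hmnice.pow b).mul (hnnice.pow c)
  have hνΓ : m^b * n^c ∈ commutator G :=
    Subgroup.mul_mem _ (Subgroup.pow_mem _ hmΓ b) (Subgroup.pow_mem _ hnΓ c)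
  -- A3 : pcomm W' z
  have hW : pcomm (s^(p.choose 2) * (m^b * n^c)) z
      = (pcomm s z)^(p.choose 2) * ((pcomm m z)^b * (pcomm n z)^c) := by
    rw [pc_mul_left, hT]
    have hν2 : pcomm (m^b * n^c) z = (pcomm m z)^b * (pcomm n z)^c := by
      rw [pc_mul_left, hmz, hnz]
      rw [cnj_eq_self_of_commute (commute_of_pc_eq_one
        (((hmnice.pc z).pow b).pc_right (Subgroup.pow_mem _ hnΓ c)))]
    rw [hν2, cnj_eq_self_of_commute (commute_of_pc_eq_one (hTnice.pc_right hνΓ))]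
  -- A4 : the conjugation correction c₁
  have hP'Γ : q^p * ρ^(p.choose 2) ∈ commutator G :=
    Subgroup.mul_mem _ (Subgroup.pow_mem _ hqΓ p) (Subgroup.pow_mem _ hρΓ _)
  have hχq : pcomm χ q = 1 := hχnice.pc_right hqΓ
  have hqps : pcomm (q^p) s = χ^p := by
    have h := pwrK' hp hG hclass hproper hqΓ s p
    rw [hχq, one_pow, mul_one] at h
    exact h
  have hqpsC : pcomm (q^p) (s^(p.choose 2)) = (χ^p)^(p.choose 2) := by
    have h := pwrK hp hG hclass hproper (Subgroup.pow_mem _ hqΓ p) s (p.choose 2)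
    rw [hqps] at h
    have h2 : pcomm (χ^p) s = 1 := (hχnice.pow p).pc_right hsΓ
    rw [h2, one_pow, mul_one] at h
    exact h
  have hc₁ : pcomm (q^p * ρ^(p.choose 2)) (s^(p.choose 2) * (m^b * n^c))
      = (χ^p)^(p.choose 2) := by
    rw [pc_mul_right]
    have e1 : pcomm (q^p * ρ^(p.choose 2)) (m^b * n^c) = 1 := hνnice.pc_left hP'Γ
    rw [e1, one_mul]
    have e2 : pcomm (q^p * ρ^(p.choose 2)) (s^(p.choose 2)) = (χ^p)^(p.choose 2) := by
      rw [pc_mul_left, hqpsC]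
      have e3 : pcomm (ρ^(p.choose 2)) (s^(p.choose 2)) = 1 :=
        (hρCnice).pc_right (Subgroup.pow_mem _ hsΓ _)
      rw [e3, mul_one]
      exact cnj_eq_self_of_commute (commute_of_pc_eq_one
        (((hχnice.pow p).pow _).pc_right (Subgroup.pow_mem _ hρΓ _)))
    rw [e2]
    exact cnj_eq_self_of_commute (commute_of_pc_eq_one
      (((hχnice.pow p).pow _).pc_right hνΓ))
  have hχCnice : Nice ((χ^p)^(p.choose 2)) := (hχnice.pow p).pow _
  have hχCx : Commute ((χ^p)^(p.choose 2)) x := hχpx.pow_left _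
  -- assemble Step A
  have hUassoc : v^p * s^(p.choose 2) * m^b * n^c
      = v^p * (s^(p.choose 2) * (m^b * n^c)) := by group
  set R := ρ^(p.choose 2) * ((χ^p)^(p.choose 2))
      * ((pcomm s z)^(p.choose 2) * ((pcomm m z)^b * (pcomm n z)^c)) with hR0
  have hUz : pcomm (v^p * s^(p.choose 2) * m^b * n^c) z = q^p * R := by
    rw [hUassoc, pc_mul_left, h1, hW, cnj_eq, hc₁, hR0]
    group
  rw [hUz]
  -- R is Nice and commutes with x
  have hRnice : Nice R :=
    ((hρCnice.mul hχCnice).mul (hTnice.mul (hmz_nice.mul hnz_nice)))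
  have hRx : Commute R x :=
    ((hρCx.mul_left hχCx).mul_left (hTx.mul_left (hmz_x.mul_left hnz_x)))
  -- Step B
  have hB1 : pcomm (q^p * R) x = pcomm (q^p) x := by
    apply pc_mul_left_simplify (pc_eq_one_of_commute hRx)
    exact hRnice.pc_left (pc_mem_commutator _ _)
  rw [hB1]
  -- final expansion
  have h := pwrK' hp hG hclass hproper hqΓ x p
  have hsigq : (pcomm (pcomm q x) q)^p = 1 := by
    apply sig hp hp3 hG hclass hproper hqΓ
    exact nice_triple hproper hMzx (commutator_le_S2 _ _) (commutator_le_S2 _ _ hv) (mem_S2_left _ _)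
      (mem_S2_right _ _)
  have hsigqC : (pcomm (pcomm q x) q)^(p.choose 2) = 1 := by
    rw [hA, pow_mul, hsigq, one_pow]
  rw [hsigqC, mul_one] at h
  exact h

end Main

end CPPE

/-- Let `p ≥ 3` be a prime and let `G` be a finite `p`-group generated by two elements, of
nilpotency class greater than `3` and in which every proper subgroup has nilpotency class
at most `3`.  Then for all `x, y, z, t ∈ G` with `z = x` or `t = x`:
`[x^p, y, z, t] = [x,y,z,t]^p` and `[y, x^p, z, t] = [y,x,z,t]^p`. -/
theorem comm_pth_power_expansion_special
    (p : ℕ) (hp : p.Prime) (hp3 : 3 ≤ p) {G : Type*} [Group G] [Finite G]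
    (hG : IsPGroup p G)
    (hgen : ∃ a b : G, Subgroup.closure {a, b} = ⊤)
    (hclass : (⊤ : Subgroup G).lowerCentralSeries 3 ≠ ⊥)
    (hproper : ∀ H : Subgroup G, H ≠ ⊤ → (⊤ : Subgroup H).lowerCentralSeries 3 = ⊥)
    (x y z t : G) (hzt : z = x ∨ t = x) :
    lcomm (x ^ p) y [z, t] = (lcomm x y [z, t]) ^ p ∧
    lcomm y (x ^ p) [z, t] = (lcomm y x [z, t]) ^ p := by
  simp only [lcomm, List.foldl]
  obtain ⟨b1, c1, hcol1⟩ := CPPE.collect_left hp hG hclass hproper x y p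
  obtain ⟨b2, c2, hcol2⟩ := CPPE.collect_right hp hG hclass hproper x y p
  rcases hzt with rfl | rfl
  · constructor
    · rw [hcol1]
      exact CPPE.gen_zx hp hp3 hG hclass hproper (CPPE.pc_mem_commutator _ _) _ _ b1 c1
    · rw [hcol2]
      exact CPPE.gen_zx hp hp3 hG hclass hproper (CPPE.pc_mem_commutator _ _) _ _ b2 c2
  · constructor
    · rw [hcol1]
      exact CPPE.gen_tx hp hp3 hG hclass hproper (CPPE.pc_mem_commutator _ _) _ _ b1 c1
    · rw [hcol2]
      exact CPPE.gen_tx hp hp3 hG hclass hproper (CPPE.pc_mem_commutator _ _) _ _ b2 c2
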